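/- Let H be a real Hilbert space with inner product ⟨·,·⟩₀ and norm ‖·‖₀, let V ⊆ H be a subspace, let N_s, N_t be extended seminorms on H, and let δ_s, δ_t > 0 be such that N_s(g) ≤ ‖g‖₀/δ_s and N_t(g) ≤ ‖g‖₀/δ_t for all g ∈ V. Then for every g ∈ V: N_s(g) ≤ ‖g‖_{N_t*} / (δ_s δ_t), where ‖h‖_{N_t*} := sup{⟨h,u⟩₀ : u ∈ H, N_t(u) ≤ 1} is the dual norm of N_t. -/

import Mathlib

open scoped ENNReal RealInnerProductSpace

noncomputable section

/-- An extended seminorm on a real inner product space: a `[0,∞]`-valued function vanishing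
at `0`, absolutely homogeneous and subadditive. -/
def IsExtSeminorm {H : Type*} [NormedAddCommGroup H] [InnerProductSpace ℝ H]
    (N : H → ℝ≥0∞) : Prop :=
  N 0 = 0 ∧ (∀ (c : ℝ) (f : H), N (c • f) = ENNReal.ofReal |c| * N f) ∧
    (∀ f g : H, N (f + g) ≤ N f + N g)

/-- The dual norm of an extended seminorm `N`:  `‖f‖_{N*} = sup {⟪f,g⟫ : N g ≤ 1}`. -/
def dualNorm {H : Type*} [NormedAddCommGroup H] [InnerProductSpace ℝ H]
    (N : H → ℝ≥0∞) (f : H) : ℝ≥0∞ :=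
  ⨆ g : {g : H // N g ≤ 1}, ENNReal.ofReal ⟪f, (g : H)⟫

/-- **Inverse (Bernstein-type) estimate in the dual norm** (Lemma A.1, second inequality):
if the Bernstein inequalities `N_s(g) ≤ ‖g‖₀/δ_s` and `N_t(g) ≤ ‖g‖₀/δ_t` hold on a subspace
`V`, then `N_s(g) ≤ ‖g‖_{N_t*}/(δ_s δ_t)` for all `g ∈ V`. -/
theorem bernstein_dual_norm_estimate
    {H : Type*} [NormedAddCommGroup H] [InnerProductSpace ℝ H]
    (V : Submodule ℝ H)
    (Ns Nt : H → ℝ≥0∞) (hNs : IsExtSeminorm Ns) (hNt : IsExtSeminorm Nt)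
    (δs δt : ℝ) (hδs : 0 < δs) (hδt : 0 < δt)
    (hBs : ∀ g ∈ V, Ns g ≤ ENNReal.ofReal (‖g‖ / δs))
    (hBt : ∀ g ∈ V, Nt g ≤ ENNReal.ofReal (‖g‖ / δt)) :
    ∀ g ∈ V, Ns g ≤ dualNorm Nt g / ENNReal.ofReal (δs * δt) := by
  intro g hg
  by_cases hg0 : g = 0
  · subst hg0
    simpa [hNs.1] using (zero_le _)
  have hn : (0:ℝ) < ‖g‖ := norm_pos_iff.mpr hg0
  -- the test element u = (δt/‖g‖) • g has Nt u ≤ 1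
  set u : H := (δt / ‖g‖) • g with hu
  have hNtu : Nt u ≤ 1 := by
    have h1 : Nt u = ENNReal.ofReal |δt / ‖g‖| * Nt g := hNt.2.1 _ _
    have h2 : Nt g ≤ ENNReal.ofReal (‖g‖ / δt) := hBt g hg
    calc Nt u = ENNReal.ofReal |δt / ‖g‖| * Nt g := h1
      _ ≤ ENNReal.ofReal (δt / ‖g‖) * ENNReal.ofReal (‖g‖ / δt) := by
          gcongr
          rw [abs_of_pos (by positivity)]
      _ = ENNReal.ofReal ((δt / ‖g‖) * (‖g‖ / δt)) := by
          rw [← ENNReal.ofReal_mul (by positivity)]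
      _ = 1 := by
          rw [div_mul_div_comm, mul_comm]
          field_simp
          exact ENNReal.ofReal_one
  -- lower bound on the dual norm
  have hD : ENNReal.ofReal (δt * ‖g‖) ≤ dualNorm Nt g := by
    have : ENNReal.ofReal ⟪g, u⟫ ≤ dualNorm Nt g :=
      le_iSup (fun (v : {v : H // Nt v ≤ 1}) => ENNReal.ofReal ⟪g, (v : H)⟫) ⟨u, hNtu⟩
    refine le_trans (le_of_eq ?_) this
    congr 1
    rw [hu, real_inner_smul_right, real_inner_self_eq_norm_sq]
    field_simp
  calc Ns g ≤ ENNReal.ofReal (‖g‖ / δs) := hBs g hg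
    _ = ENNReal.ofReal (δt * ‖g‖) / ENNReal.ofReal (δs * δt) := by
        rw [← ENNReal.ofReal_div_of_pos (by positivity)]
        congr 1
        field_simp
    _ ≤ dualNorm Nt g / ENNReal.ofReal (δs * δt) := by gcongr

end
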